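/- A permutation σ of [n] is a Baxter permutation if and only if its inverse σ⁻¹ is a Baxter permutation. -/

import Mathlib

/-- σ avoids the vincular pattern 2-41-3: there are no indices
`i < j < j+1 < k` with `σ (j+1) < σ i < σ k < σ j`. -/
def Avoids2413 {n : ℕ} (σ : Equiv.Perm (Fin n)) : Prop :=
  ¬ ∃ (i k : Fin n) (j : ℕ) (hj : j + 1 < n),
      i.1 < j ∧ j + 1 < k.1 ∧
      σ ⟨j + 1, hj⟩ < σ i ∧ σ i < σ k ∧ σ k < σ ⟨j, Nat.lt_of_succ_lt hj⟩

/-- σ avoids the vincular pattern 3-14-2: there are no indices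
`i < j < j+1 < k` with `σ j < σ k < σ i < σ (j+1)`. -/
def Avoids3142 {n : ℕ} (σ : Equiv.Perm (Fin n)) : Prop :=
  ¬ ∃ (i k : Fin n) (j : ℕ) (hj : j + 1 < n),
      i.1 < j ∧ j + 1 < k.1 ∧
      σ ⟨j, Nat.lt_of_succ_lt hj⟩ < σ k ∧ σ k < σ i ∧ σ i < σ ⟨j + 1, hj⟩

/-- A Baxter permutation avoids the vincular patterns 2-41-3 and 3-14-2. -/
def IsBaxter {n : ℕ} (σ : Equiv.Perm (Fin n)) : Prop :=
  Avoids2413 σ ∧ Avoids3142 σ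

/-- Discrete IVT: last point where `f ≤ b` before an up-crossing. -/
lemma cross_up (f : ℕ → ℕ) (b : ℕ) :
    ∀ d p r, r - p ≤ d → p ≤ r → f p ≤ b → b < f r →
      ∃ j, p ≤ j ∧ j < r ∧ f j ≤ b ∧ b < f (j + 1) := by
  intro d
  induction d with
  | zero =>
    intro p r h1 h2 hp hr
    have : p = r := by omega
    subst this; omega
  | succ d ih =>
    intro p r h1 h2 hp hr
    rcases eq_or_lt_of_le h2 with rfl | hlt
    · omega
    · by_cases h : b < f (p + 1)
      · exact ⟨p, le_refl _, hlt, hp, h⟩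
      · obtain ⟨j, hj1, hj2, hj3, hj4⟩ :=
          ih (p + 1) r (by omega) (by omega) (le_of_not_gt h) hr
        exact ⟨j, by omega, hj2, hj3, hj4⟩

/-- Discrete IVT: last point where `f > b` before a down-crossing. -/
lemma cross_down (f : ℕ → ℕ) (b : ℕ) :
    ∀ d p r, r - p ≤ d → p ≤ r → b < f p → f r ≤ b →
      ∃ j, p ≤ j ∧ j < r ∧ b < f j ∧ f (j + 1) ≤ b := by
  intro d
  induction d with
  | zero =>
    intro p r h1 h2 hp hr
    have : p = r := by omega
    subst this; omega
  | succ d ih =>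
    intro p r h1 h2 hp hr
    rcases eq_or_lt_of_le h2 with rfl | hlt
    · omega
    · by_cases h : f (p + 1) ≤ b
      · exact ⟨p, le_refl _, hlt, hp, h⟩
      · obtain ⟨j, hj1, hj2, hj3, hj4⟩ :=
          ih (p + 1) r (by omega) (by omega) (lt_of_not_ge h) hr
        exact ⟨j, by omega, hj2, hj3, hj4⟩

lemma avoids3142_inv_transfer {n : ℕ} (σ : Equiv.Perm (Fin n)) (h : Avoids3142 σ) :
    Avoids2413 σ⁻¹ := by
  rintro ⟨i, k, j, hj, h1, h2, h3, h4, h5⟩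
  apply h
  set p : Fin n := σ⁻¹ i with hp
  set q : Fin n := σ⁻¹ ⟨j, Nat.lt_of_succ_lt hj⟩ with hq
  set q' : Fin n := σ⁻¹ ⟨j + 1, hj⟩ with hq'
  set r : Fin n := σ⁻¹ k with hr
  have hσp : σ p = i := Equiv.apply_symm_apply σ i
  have hσq : σ q = ⟨j, Nat.lt_of_succ_lt hj⟩ := Equiv.apply_symm_apply σ _
  have hσq' : σ q' = ⟨j + 1, hj⟩ := Equiv.apply_symm_apply σ _
  have hσr : σ r = k := Equiv.apply_symm_apply σ k
  -- positions : q' < p < r < q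
  have o1 : q'.1 < p.1 := h3
  have o2 : p.1 < r.1 := h4
  have o3 : r.1 < q.1 := h5
  set f : ℕ → ℕ := fun m => if hm : m < n then (σ ⟨m, hm⟩ : Fin n).1 else 0 with hf
  have hfp : f p.1 = i.1 := by
    simp only [hf, p.2, dif_pos, Fin.eta]
    rw [hσp]
  have hfr : f r.1 = k.1 := by
    simp only [hf, r.2, dif_pos, Fin.eta]
    rw [hσr]
  obtain ⟨j0, hj0a, hj0b, hj0c, hj0d⟩ :=
    cross_up f j (r.1 - p.1) p.1 r.1 (le_refl _) (le_of_lt o2)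
      (by omega) (by omega)
  have hj0n : j0 + 1 < n := lt_of_le_of_lt hj0b r.2
  have hfj0 : f j0 = (σ ⟨j0, Nat.lt_of_succ_lt hj0n⟩ : Fin n).1 := by
    simp [hf, Nat.lt_of_succ_lt hj0n]
  have hfj1 : f (j0 + 1) = (σ ⟨j0 + 1, hj0n⟩ : Fin n).1 := by
    simp [hf, hj0n]
  -- f j0 ≠ j
  have hne1 : f j0 ≠ j := by
    intro hE
    have : σ ⟨j0, Nat.lt_of_succ_lt hj0n⟩ = ⟨j, Nat.lt_of_succ_lt hj⟩ := by
      apply Fin.ext; rw [← hfj0, hE]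
    have : (⟨j0, Nat.lt_of_succ_lt hj0n⟩ : Fin n) = q := by
      rw [hq]; exact (Equiv.eq_symm_apply σ).mpr this
    have : j0 = q.1 := congrArg Fin.val this
    omega
  have hne2 : f (j0 + 1) ≠ j + 1 := by
    intro hE
    have : σ ⟨j0 + 1, hj0n⟩ = ⟨j + 1, hj⟩ := by
      apply Fin.ext; rw [← hfj1, hE]
    have : (⟨j0 + 1, hj0n⟩ : Fin n) = q' := by
      rw [hq']; exact (Equiv.eq_symm_apply σ).mpr this
    have : j0 + 1 = q'.1 := congrArg Fin.val this
    omega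
  refine ⟨q', q, j0, hj0n, by omega, by omega, ?_, ?_, ?_⟩
  · rw [hσq]; exact Fin.lt_def.mpr (by simp only [Fin.val_mk]; rw [← hfj0]; omega)
  · rw [hσq, hσq']; exact Fin.lt_def.mpr (by simp)
  · rw [hσq']; exact Fin.lt_def.mpr (by simp only [Fin.val_mk]; rw [← hfj1]; omega)

lemma avoids2413_inv_transfer {n : ℕ} (σ : Equiv.Perm (Fin n)) (h : Avoids2413 σ) :
    Avoids3142 σ⁻¹ := by
  rintro ⟨i, k, j, hj, h1, h2, h3, h4, h5⟩
  apply h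
  set p : Fin n := σ⁻¹ i with hp
  set q : Fin n := σ⁻¹ ⟨j, Nat.lt_of_succ_lt hj⟩ with hq
  set q' : Fin n := σ⁻¹ ⟨j + 1, hj⟩ with hq'
  set r : Fin n := σ⁻¹ k with hr
  have hσp : σ p = i := Equiv.apply_symm_apply σ i
  have hσq : σ q = ⟨j, Nat.lt_of_succ_lt hj⟩ := Equiv.apply_symm_apply σ _
  have hσq' : σ q' = ⟨j + 1, hj⟩ := Equiv.apply_symm_apply σ _
  have hσr : σ r = k := Equiv.apply_symm_apply σ k
  -- positions : q < r < p < q'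
  have o1 : q.1 < r.1 := h3
  have o2 : r.1 < p.1 := h4
  have o3 : p.1 < q'.1 := h5
  set f : ℕ → ℕ := fun m => if hm : m < n then (σ ⟨m, hm⟩ : Fin n).1 else 0 with hf
  have hfp : f p.1 = i.1 := by
    simp only [hf, p.2, dif_pos, Fin.eta]
    rw [hσp]
  have hfr : f r.1 = k.1 := by
    simp only [hf, r.2, dif_pos, Fin.eta]
    rw [hσr]
  obtain ⟨j0, hj0a, hj0b, hj0c, hj0d⟩ :=
    cross_down f j (p.1 - r.1) r.1 p.1 (le_refl _) (le_of_lt o2)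
      (by omega) (by omega)
  have hj0n : j0 + 1 < n := lt_of_le_of_lt hj0b p.2
  have hfj0 : f j0 = (σ ⟨j0, Nat.lt_of_succ_lt hj0n⟩ : Fin n).1 := by
    simp [hf, Nat.lt_of_succ_lt hj0n]
  have hfj1 : f (j0 + 1) = (σ ⟨j0 + 1, hj0n⟩ : Fin n).1 := by
    simp [hf, hj0n]
  have hne1 : f j0 ≠ j + 1 := by
    intro hE
    have : σ ⟨j0, Nat.lt_of_succ_lt hj0n⟩ = ⟨j + 1, hj⟩ := by
      apply Fin.ext; rw [← hfj0, hE]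
    have : (⟨j0, Nat.lt_of_succ_lt hj0n⟩ : Fin n) = q' := by
      rw [hq']; exact (Equiv.eq_symm_apply σ).mpr this
    have : j0 = q'.1 := congrArg Fin.val this
    omega
  have hne2 : f (j0 + 1) ≠ j := by
    intro hE
    have : σ ⟨j0 + 1, hj0n⟩ = ⟨j, Nat.lt_of_succ_lt hj⟩ := by
      apply Fin.ext; rw [← hfj1, hE]
    have : (⟨j0 + 1, hj0n⟩ : Fin n) = q := by
      rw [hq]; exact (Equiv.eq_symm_apply σ).mpr this
    have : j0 + 1 = q.1 := congrArg Fin.val this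
    omega
  refine ⟨q, q', j0, hj0n, by omega, by omega, ?_, ?_, ?_⟩
  · rw [hσq]; exact Fin.lt_def.mpr (by simp only [Fin.val_mk]; rw [← hfj1]; omega)
  · rw [hσq, hσq']; exact Fin.lt_def.mpr (by simp)
  · rw [hσq']; exact Fin.lt_def.mpr (by simp only [Fin.val_mk]; rw [← hfj0]; omega)

lemma isBaxter_inv_of {n : ℕ} (σ : Equiv.Perm (Fin n)) (h : IsBaxter σ) :
    IsBaxter σ⁻¹ :=
  ⟨avoids3142_inv_transfer σ h.2, avoids2413_inv_transfer σ h.1⟩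

theorem baxter_iff_inverse_baxter {n : ℕ} (σ : Equiv.Perm (Fin n)) :
    IsBaxter σ ↔ IsBaxter σ⁻¹ := by
  constructor
  · exact isBaxter_inv_of σ
  · intro h
    have := isBaxter_inv_of σ⁻¹ h
    rwa [inv_inv] at this
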